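/- Let G be a cocomparability graph, σ an umbrella-free LDFS ordering (v_1,…,v_n) of G, and suppose v_i v_{i+1} ∉ E(G) for some i. Then v_i is avoidable in G: every two non-adjacent neighbours v_j, v_k of v_i lie on a common induced 4-cycle with v_i. -/

import Mathlib

open SimpleGraph

namespace MoplexPaper

variable {V : Type*}

/-- Reachability in `G - S`: a walk from `u` to `v` all of whose vertices avoid `S`. -/
def ReachOutside (G : SimpleGraph V) (S : Set V) (u v : V) : Prop :=
  ∃ p : G.Walk u v, ∀ x ∈ p.support, x ∉ S

/-- `S` is a `u,v`-separator. -/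
def IsSeparator (G : SimpleGraph V) (u v : V) (S : Set V) : Prop :=
  ¬ G.Adj u v ∧ u ∉ S ∧ v ∉ S ∧ ¬ ReachOutside G S u v

/-- `S` is a minimal `u,v`-separator. -/
def IsMinSeparator (G : SimpleGraph V) (u v : V) (S : Set V) : Prop :=
  IsSeparator G u v S ∧ ∀ T ⊂ S, ¬ IsSeparator G u v T

/-- `S` is a minimal separator of `G`. -/
def IsMinimalSeparator (G : SimpleGraph V) (S : Set V) : Prop :=
  ∃ u v, u ≠ v ∧ IsMinSeparator G u v S

/-- The (open) neighbourhood of a set of vertices. -/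
def setNbhd (G : SimpleGraph V) (X : Set V) : Set V :=
  {v | v ∉ X ∧ ∃ x ∈ X, G.Adj v x}

/-- The closed neighbourhood of a vertex. -/
def closedNbhd (G : SimpleGraph V) (v : V) : Set V :=
  insert v (G.neighborSet v)

/-- `M` is a module of `G`. -/
def IsModule (G : SimpleGraph V) (M : Set V) : Prop :=
  ∀ v ∉ M, (∀ x ∈ M, G.Adj v x) ∨ (∀ x ∈ M, ¬ G.Adj v x)

/-- `M` is a clique module of `G`. -/
def IsCliqueModule (G : SimpleGraph V) (M : Set V) : Prop :=
  G.IsClique M ∧ IsModule G M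

/-- `X` is a moplex of `G`: an inclusion-maximal clique module whose
neighbourhood is empty or a minimal separator. -/
def IsMoplex (G : SimpleGraph V) (X : Set V) : Prop :=
  X.Nonempty ∧ IsCliqueModule G X ∧
  (∀ Y, X ⊆ Y → IsCliqueModule G Y → Y = X) ∧
  (setNbhd G X = ∅ ∨ IsMinimalSeparator G (setNbhd G X))

/-- A vertex is moplicial if it belongs to a moplex. -/
def Moplicial (G : SimpleGraph V) (v : V) : Prop := ∃ X, IsMoplex G X ∧ v ∈ X

/-- An extension of `v`: an induced `P₃` with midpoint `v`. -/
def IsExtension (G : SimpleGraph V) (v a b : V) : Prop :=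
  a ≠ b ∧ G.Adj v a ∧ G.Adj v b ∧ ¬ G.Adj a b

/-- A cycle is induced if the only edges of `G` among its vertices are its own edges. -/
def IsInducedCycle (G : SimpleGraph V) {w : V} (c : G.Walk w w) : Prop :=
  c.IsCycle ∧ ∀ x ∈ c.support, ∀ y ∈ c.support, G.Adj x y → s(x, y) ∈ c.edges

/-- `v` is avoidable: every extension of `v` is contained in an induced cycle. -/
def Avoidable (G : SimpleGraph V) (v : V) : Prop :=
  ∀ a b, IsExtension G v a b →
    ∃ (w : V) (c : G.Walk w w), IsInducedCycle G c ∧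
      a ∈ c.support ∧ v ∈ c.support ∧ b ∈ c.support

/-- `A` is an asteroidal set of `G`. -/
def IsAsteroidal (G : SimpleGraph V) (A : Set V) : Prop :=
  ∀ a ∈ A, ∀ x ∈ A, ∀ y ∈ A, x ≠ a → y ≠ a →
    ReachOutside G (closedNbhd G a) x y

/-- `G` is AT-free: it has no asteroidal triple. -/
def ATFree (G : SimpleGraph V) : Prop :=
  ¬ ∃ A : Set V, IsAsteroidal G A ∧ A.ncard = 3

/-- `G` has exactly the two moplexes `U` and `W`. -/
def HasExactlyTwoMoplexes (G : SimpleGraph V) (U W : Set V) : Prop :=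
  IsMoplex G U ∧ IsMoplex G W ∧ U ≠ W ∧ ∀ X, IsMoplex G X → X = U ∨ X = W

/-- `G` is not complete. -/
def NonComplete (G : SimpleGraph V) : Prop :=
  ∃ x y : V, x ≠ y ∧ ¬ G.Adj x y

/-- In an umbrella-free LDFS ordering of a connected cocomparability graph, if
`v_i v_{i+1} ∉ E(G)` then `v_i` is avoidable: every two non-adjacent neighbours of
`v_i` lie with it on a common induced 4-cycle. -/
lemma c4_induced {V : Type*} [DecidableEq V] (G : SimpleGraph V) (a d b i : V)
    (Had : G.Adj a d) (Hdb : G.Adj d b) (Hbi : G.Adj b i) (Hia : G.Adj i a)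
    (Hab : ¬ G.Adj a b) (Hdi : ¬ G.Adj d i)
    (nab : a ≠ b) (ndi : d ≠ i) (nad : a ≠ d) (nai : a ≠ i) (ndb : d ≠ b) (nbi : b ≠ i) :
    ∃ (w : V) (c : G.Walk w w), IsInducedCycle G c ∧
      a ∈ c.support ∧ i ∈ c.support ∧ b ∈ c.support := by
  refine ⟨a, Walk.cons Had (Walk.cons Hdb (Walk.cons Hbi (Walk.cons Hia Walk.nil))),
    ⟨?_, ?_⟩, by simp, by simp, by simp⟩
  · rw [Walk.isCycle_def, Walk.isTrail_def]
    simp [Sym2.eq_iff, List.nodup_cons]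
    tauto
  · intro x hx y hy hxy
    simp only [Walk.support_cons, Walk.support_nil, List.mem_cons,
      List.not_mem_nil, or_false] at hx hy
    simp only [Walk.edges_cons, Walk.edges_nil, List.mem_cons, List.not_mem_nil, or_false]
    rcases hx with rfl | rfl | rfl | rfl | rfl <;> rcases hy with rfl | rfl | rfl | rfl | rfl <;>
      first
      | exact absurd hxy G.irrefl
      | (exfalso;
         first
         | exact Hab hxy | exact Hdi hxy
         | exact Hab (G.adj_symm hxy) | exact Hdi (G.adj_symm hxy))
      | simp [Sym2.eq_iff]

theorem umbrellaFree_LDFS_nonEdge_avoidable (n : ℕ) (G : SimpleGraph (Fin n))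
    (hconn : G.Connected)
    (hldfs : ∀ a b c : Fin n, a < b → b < c → G.Adj a c → ¬ G.Adj a b →
      ∃ d, a < d ∧ d < b ∧ G.Adj d b ∧ ¬ G.Adj d c)
    (humb : ∀ a b c : Fin n, a < b → b < c → G.Adj a c → G.Adj a b ∨ G.Adj b c)
    (i j : Fin n) (hij : (i : ℕ) + 1 = (j : ℕ)) (hnadj : ¬ G.Adj i j) :
    Avoidable G i ∧
    ∀ a b : Fin n, G.Adj i a → G.Adj i b → a ≠ b → ¬ G.Adj a b →
      ∃ d : Fin n, d ≠ i ∧ ¬ G.Adj d i ∧ G.Adj d a ∧ G.Adj d b := by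
  -- every neighbour of `i` precedes `i`
  have hlt : ∀ k : Fin n, G.Adj i k → k < i := by
    intro k hk
    by_contra hik
    push_neg at hik
    have hik' : i < k := lt_of_le_of_ne hik (fun h => G.irrefl (h ▸ hk))
    have hjk : j ≤ k := by
      rw [Fin.le_def, ← hij]
      exact Nat.succ_le_of_lt (Fin.lt_def.mp hik')
    rcases eq_or_lt_of_le hjk with rfl | hjk'
    · exact hnadj hk
    · obtain ⟨d, hd1, hd2, -, -⟩ := hldfs i j k (by rw [Fin.lt_def, ← hij]; omega) hjk' hk hnadj
      rw [Fin.lt_def] at hd1 hd2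
      omega
  -- the key construction for `a < b`
  have key : ∀ a b : Fin n, G.Adj i a → G.Adj i b → a < b → ¬ G.Adj a b →
      ∃ d : Fin n, a < d ∧ d < b ∧ G.Adj a d ∧ G.Adj d b ∧ ¬ G.Adj d i := by
    intro a b ha hb hab hnab
    have hbi : b < i := hlt b hb
    obtain ⟨d, had, hdb, Hdb, Hdi⟩ := hldfs a b i hab hbi (G.adj_symm ha) hnab
    have hdi : d < i := hdb.trans hbi
    have Had : G.Adj a d := by
      rcases humb a d i had hdi (G.adj_symm ha) with h | h
      · exact h
      · exact absurd h Hdi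
    exact ⟨d, had, hdb, Had, Hdb, Hdi⟩
  constructor
  · intro a b ⟨hne, ha, hb, hnab⟩
    rcases lt_or_gt_of_ne hne with h | h
    · obtain ⟨d, had, hdb, Had, Hdb, Hdi⟩ := key a b ha hb h hnab
      have hbi : b < i := hlt b hb
      exact c4_induced G a d b i Had Hdb (G.adj_symm hb) ha hnab Hdi
        hne (ne_of_lt (hdb.trans hbi)) (ne_of_lt had) (ne_of_lt (h.trans hbi))
        (ne_of_lt hdb) (ne_of_lt hbi)
    · obtain ⟨d, had, hdb, Had, Hdb, Hdi⟩ := key b a hb ha h (fun hh => hnab (G.adj_symm hh))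
      have hbi : a < i := hlt a ha
      obtain ⟨w, c, hc, h1, h2, h3⟩ := c4_induced G b d a i Had Hdb (G.adj_symm ha) hb
        (fun hh => hnab (G.adj_symm hh)) Hdi
        hne.symm (ne_of_lt (hdb.trans hbi)) (ne_of_lt had) (ne_of_lt (h.trans hbi))
        (ne_of_lt hdb) (ne_of_lt hbi)
      exact ⟨w, c, hc, h3, h2, h1⟩
  · intro a b ha hb hne hnab
    rcases lt_or_gt_of_ne hne with h | h
    · obtain ⟨d, had, hdb, Had, Hdb, Hdi⟩ := key a b ha hb h hnab
      exact ⟨d, ne_of_lt (hdb.trans (hlt b hb)), Hdi, G.adj_symm Had, Hdb⟩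
    · obtain ⟨d, had, hdb, Had, Hdb, Hdi⟩ := key b a hb ha h (fun hh => hnab (G.adj_symm hh))
      exact ⟨d, ne_of_lt (hdb.trans (hlt a ha)), Hdi, Hdb, G.adj_symm Had⟩

end MoplexPaper
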